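/- Let G be a transitive subgroup of S_d (d ≥ 5) containing a (d−1)-cycle σ and an element τ whose cycle decomposition consists of a 2-cycle and a (d−3)-cycle with d−3 odd. Then some power of τ is a transposition, and consequently G = S_d. -/

import Mathlib

open Equiv Equiv.Perm Finset

/-- If a transitive subgroup `G ≤ S_d` (`d ≥ 5`) contains a `(d-1)`-cycle `σ`
and an element `τ` whose cycle decomposition is a `2`-cycle together with a
`(d-3)`-cycle, where `d - 3` is odd, then some power of `τ` is a transposition
and `G = S_d`. -/
theorem stmt_10 (d : ℕ) (hd : 5 ≤ d) (hodd : Odd (d - 3))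
    (G : Subgroup (Equiv.Perm (Fin d)))
    (htrans : ∀ i j : Fin d, ∃ g ∈ G, g i = j)
    (σ : Equiv.Perm (Fin d)) (hσG : σ ∈ G) (hσ : σ.IsCycle)
    (hσcard : σ.support.card = d - 1)
    (τ : Equiv.Perm (Fin d)) (hτG : τ ∈ G)
    (hτ : τ.cycleType = {2, d - 3}) :
    (∃ k : ℕ, (τ ^ k).IsSwap) ∧ G = ⊤ := by
  obtain ⟨q, hq⟩ := hodd
  have hd3ne2 : d - 3 ≠ 2 := by omega
  -- extract the two cycle factors
  have h2 : (2 : ℕ) ∈ τ.cycleType := by rw [hτ]; simp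
  have h3 : (d - 3 : ℕ) ∈ τ.cycleType := by rw [hτ]; simp
  rw [Equiv.Perm.cycleType_def, Multiset.mem_map] at h2 h3
  obtain ⟨c, hc, hc2⟩ := h2
  obtain ⟨c', hc', hc3⟩ := h3
  rw [← Finset.mem_def] at hc hc'
  simp only [Function.comp_apply] at hc2 hc3
  have hcc' : c ≠ c' := by
    intro h; apply hd3ne2; rw [← hc3, ← h, hc2]
  -- cycleFactorsFinset τ = {c, c'}
  have hcardF : τ.cycleFactorsFinset.card = 2 := by
    have h := (Equiv.Perm.cycleType_def τ).symm.trans hτ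
    have h2 := congrArg Multiset.card h
    rw [Multiset.card_map] at h2
    rw [Finset.card_def, h2, Multiset.insert_eq_cons, Multiset.card_cons,
      Multiset.card_singleton]
  have hF : ({c, c'} : Finset (Equiv.Perm (Fin d))) = τ.cycleFactorsFinset := by
    apply Finset.eq_of_subset_of_card_le
    · intro x hx
      rcases Finset.mem_insert.mp hx with h | h
      · rwa [h]
      · rw [Finset.mem_singleton.mp h]; exact hc'
    · rw [hcardF, Finset.card_insert_of_notMem (by simpa using hcc'),
        Finset.card_singleton]
  -- τ = c * c'
  have hcyc : c.IsCycle := (Equiv.Perm.mem_cycleFactorsFinset_iff.mp hc).1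
  have hcyc' : c'.IsCycle := (Equiv.Perm.mem_cycleFactorsFinset_iff.mp hc').1
  have hdisj : Equiv.Perm.Disjoint c c' := by
    have := Equiv.Perm.cycleFactorsFinset_pairwise_disjoint τ
    exact this hc hc' hcc'
  have hcomm : Commute c c' := hdisj.commute
  have key : ∀ (s : Finset (Equiv.Perm (Fin d)))
      (comm : (s : Set (Equiv.Perm (Fin d))).Pairwise Commute), s = {c, c'} →
      s.noncommProd id comm = c * c' := by
    intro s comm hs
    subst hs
    rw [Finset.noncommProd_insert_of_notMem _ _ _ _ (by simpa using hcc'),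
      Finset.noncommProd_singleton, id, id]
  have hτmul : τ = c * c' := by
    rw [← Equiv.Perm.cycleFactorsFinset_noncommProd τ]
    exact key _ _ hF.symm
  -- powers
  have horderc : orderOf c = 2 := by rw [hcyc.orderOf, hc2]
  have horderc' : orderOf c' = d - 3 := by rw [hcyc'.orderOf, hc3]
  have hpow : τ ^ (d - 3) = c := by
    rw [hτmul, hcomm.mul_pow]
    have h1 : c' ^ (d - 3) = 1 := by rw [← horderc']; exact pow_orderOf_eq_one c'
    have h2 : c ^ (d - 3) = c := by
      rw [hq, pow_succ, pow_mul, ← horderc, pow_orderOf_eq_one, one_pow, one_mul]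
    rw [h1, h2, mul_one]
  have hswap : c.IsSwap := Equiv.Perm.card_support_eq_two.mp hc2
  have hcG : c ∈ G := hpow ▸ pow_mem hτG (d - 3)
  refine ⟨⟨d - 3, hpow ▸ hswap⟩, ?_⟩
  -- the fixed point of σ
  obtain ⟨x, hx⟩ : ∃ x, σ.supportᶜ = {x} := by
    apply Finset.card_eq_one.mp
    rw [Finset.card_compl, hσcard, Fintype.card_fin]
    omega
  have hmemsupp : ∀ y : Fin d, y ≠ x → y ∈ σ.support := by
    intro y hy
    by_contra h
    have : y ∈ σ.supportᶜ := Finset.mem_compl.mpr h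
    rw [hx, Finset.mem_singleton] at this
    exact hy this
  obtain ⟨a, b, hab, hcab⟩ := hswap
  -- 2-transitivity: all swaps are in G
  have htwo : ∀ i j : Fin d, i ≠ j → Equiv.swap i j ∈ G := by
    intro i j hij
    obtain ⟨g1, hg1G, hg1⟩ := htrans a i
    obtain ⟨g2, hg2G, hg2⟩ := htrans x i
    have hb' : g1 b ≠ i := by
      intro h
      exact hab (g1.injective (h.trans hg1.symm)).symm
    have h1 : g2⁻¹ (g1 b) ∈ σ.support := by
      apply hmemsupp
      intro h
      apply hb'
      have := congrArg g2 h
      rw [Equiv.Perm.inv_def, Equiv.apply_symm_apply, hg2] at this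
      exact this
    have h2 : g2⁻¹ j ∈ σ.support := by
      apply hmemsupp
      intro h
      apply hij.symm
      have := congrArg g2 h
      rw [Equiv.Perm.inv_def, Equiv.apply_symm_apply, hg2] at this
      exact this
    obtain ⟨k, hk⟩ := hσ.exists_pow_eq
      (Equiv.Perm.mem_support.mp h1) (Equiv.Perm.mem_support.mp h2)
    set h := g2 * σ ^ k * g2⁻¹ with hh
    have hhG : h ∈ G := mul_mem (mul_mem hg2G (pow_mem hσG k)) (inv_mem hg2G)
    have hhi : h i = i := by
      have hxs : x ∉ σ.support :=
        Finset.mem_compl.mp (by rw [hx]; exact Finset.mem_singleton_self x)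
      have hfix : (σ ^ k) x = x := by
        have : x ∉ (σ ^ k).support := fun hm => hxs (Equiv.Perm.support_pow_le σ k hm)
        rwa [Equiv.Perm.notMem_support] at this
      simp only [hh, Equiv.Perm.mul_apply]
      rw [← hg2, Equiv.Perm.inv_def, Equiv.symm_apply_apply, hfix, hg2]
    have hhb : h (g1 b) = j := by
      simp only [hh, Equiv.Perm.mul_apply]
      rw [hk, Equiv.Perm.inv_def, Equiv.apply_symm_apply]
    set g := h * g1 with hg
    have hgG : g ∈ G := mul_mem hhG hg1G
    have hga : g a = i := by rw [hg, Equiv.Perm.mul_apply, hg1, hhi]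
    have hgb : g b = j := by rw [hg, Equiv.Perm.mul_apply, hhb]
    have : Equiv.swap i j = g * c * g⁻¹ := by
      rw [← hga, ← hgb, Equiv.swap_apply_apply, hcab]
    rw [this]
    exact mul_mem (mul_mem hgG hcG) (inv_mem hgG)
  -- conclude G = ⊤
  rw [eq_top_iff, ← Equiv.Perm.closure_isSwap, Subgroup.closure_le]
  rintro f ⟨u, v, huv, rfl⟩
  exact htwo u v huv
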